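/- Let Ω₁ ⊂ ℂⁿ and Ω₂ ⊂ ℂᵐ be bounded domains, p > 0 not an even integer, and T : Aᵖ(Ω₁) → Aᵖ(Ω₂) a linear isometry. Then: (i) for every z ∈ Ω'₁ there is a unique w ∈ Ω₂ with φ(z)·(Tφ₀)(w) = (Tφ)(w)·φ₀(z) for all φ, φ₀ ∈ Aᵖ(Ω₁), so the assignment F(z) = w defines a bijection F : Ω'₁ → Ω'₂; (ii) if z_j ∈ Ω'₁ converges to z₀ ∈ Ω₁ and F(z_j) converges to w₀ ∈ Ω₂, then z₀ ∈ Ω'₁, w₀ ∈ Ω'₂, and F(z₀) = w₀; (iii) for z ∈ Ω'₁ and φ ∈ Aᵖ(Ω₁), φ(z) = 0 if and only if (Tφ)(F(z)) = 0. -/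

import Mathlib

open MeasureTheory Metric Set
open scoped Real ENNReal Topology

noncomputable section

/-- `Cn n` is complex Euclidean space `ℂⁿ`. -/
abbrev Cn (n : ℕ) : Type := EuclideanSpace ℂ (Fin n)

instance (n : ℕ) : MeasurableSpace (Cn n) :=
  MeasurableSpace.comap (WithLp.ofLp (p := 2)) (MeasurableSpace.pi : MeasurableSpace (Fin n → ℂ))
instance (n : ℕ) : MeasureTheory.MeasureSpace (Cn n) :=
  ⟨Measure.map (WithLp.toLp 2) (MeasureTheory.MeasureSpace.pi : MeasureSpace (Fin n → ℂ)).volume⟩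

/-- A function `u : E → [-∞, ∞)` is plurisubharmonic on `Ω` if it is upper semicontinuous on
`Ω`, takes values in `[-∞, ∞)` there, and satisfies the sub-mean value inequality on circles
contained (together with their discs) in `Ω` along every complex line.  The sub-mean value
inequality is expressed through all truncations `max u (-c)` of `u` from below. -/
def PlurisubharmonicOn {E : Type*} [NormedAddCommGroup E] [NormedSpace ℂ E]
    (u : E → EReal) (Ω : Set E) : Prop :=
  UpperSemicontinuousOn u Ω ∧ (∀ x ∈ Ω, u x ≠ ⊤) ∧
  ∀ (a b : E) (r : ℝ), 0 < r →
    (∀ t : ℂ, ‖t‖ ≤ r → a + t • b ∈ Ω) →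
    ∀ c : ℝ, u a ≤
      ((((2 * Real.pi)⁻¹ *
        ∫ θ in (0:ℝ)..(2 * Real.pi),
          max (u (a + ((r : ℂ) * Complex.exp ((θ : ℂ) * Complex.I)) • b)).toReal (-c)) : ℝ) : EReal)

/-- A bounded domain in `ℂⁿ`: open, connected and bounded. -/
def IsBoundedDomain {n : ℕ} (Ω : Set (Cn n)) : Prop :=
  IsOpen Ω ∧ IsConnected Ω ∧ Bornology.IsBounded Ω

/-- Membership in the space `Aᵖ(Ω)` of `Lᵖ`-integrable holomorphic functions on `Ω`. -/
def MemAp {n : ℕ} (Ω : Set (Cn n)) (p : ℝ) (φ : Cn n → ℂ) : Prop :=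
  DifferentiableOn ℂ φ Ω ∧ IntegrableOn (fun z => ‖φ z‖ ^ p) Ω volume

/-- The `Lᵖ`-pseudonorm `‖φ‖_p = (∫_Ω |φ|ᵖ)^{1/p}`. -/
def pNorm {n : ℕ} (Ω : Set (Cn n)) (p : ℝ) (φ : Cn n → ℂ) : ℝ :=
  (∫ z in Ω, ‖φ z‖ ^ p) ^ (1 / p)

/-- The `p`-Bergman kernel `B_{Ω,p}(z) = sup |φ(z)|²/‖φ‖_p²`, valued in `[0,∞]`. -/
def pBergman {n : ℕ} (Ω : Set (Cn n)) (p : ℝ) (z : Cn n) : ℝ≥0∞ :=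
  ⨆ φ : {φ : Cn n → ℂ // MemAp Ω p φ ∧ ¬ Set.EqOn φ 0 Ω},
    ENNReal.ofReal (‖φ.1 z‖ ^ 2 / pNorm Ω p φ.1 ^ 2)

/-- The `p`-Bergman kernel of `Ω` is exhaustive: every sublevel set is compact. -/
def BergmanExhaustive {n : ℕ} (Ω : Set (Cn n)) (p : ℝ) : Prop :=
  ∀ A : ℝ, IsCompact {z ∈ Ω | pBergman Ω p z ≤ ENNReal.ofReal A}

/-- `Ω` is hyperconvex: it carries a negative plurisubharmonic exhaustion function. -/
def Hyperconvex {n : ℕ} (Ω : Set (Cn n)) : Prop :=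
  ∃ ρ : Cn n → EReal, PlurisubharmonicOn ρ Ω ∧ (∀ z ∈ Ω, ρ z < 0) ∧
    ∀ c : ℝ, c < 0 → IsCompact {z ∈ Ω | ρ z ≤ ((c : ℝ) : EReal)}

/-- A surjective linear isometry `T : Aᵖ(Ω₁) → Aᵖ(Ω₂)` (as a map on representing functions;
linearity, surjectivity and values only matter on `Ω₂`). -/
structure ApIsometry {n m : ℕ} (Ω₁ : Set (Cn n)) (Ω₂ : Set (Cn m)) (p : ℝ) where
  toFun : (Cn n → ℂ) → (Cn m → ℂ)
  mem : ∀ φ, MemAp Ω₁ p φ → MemAp Ω₂ p (toFun φ)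
  map_add : ∀ φ ψ, MemAp Ω₁ p φ → MemAp Ω₁ p ψ →
    ∀ w ∈ Ω₂, toFun (fun z => φ z + ψ z) w = toFun φ w + toFun ψ w
  map_smul : ∀ (c : ℂ) (φ), MemAp Ω₁ p φ → ∀ w ∈ Ω₂,
    toFun (fun z => c * φ z) w = c * toFun φ w
  surjective : ∀ ψ, MemAp Ω₂ p ψ → ∃ φ, MemAp Ω₁ p φ ∧ ∀ w ∈ Ω₂, toFun φ w = ψ w
  isometry : ∀ φ, MemAp Ω₁ p φ → pNorm Ω₂ p (toFun φ) = pNorm Ω₁ p φ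

/-- `F` is a biholomorphic map from `Ω₁` onto `Ω₂`. -/
def Biholo {n m : ℕ} (Ω₁ : Set (Cn n)) (Ω₂ : Set (Cn m)) (F : Cn n → Cn m) : Prop :=
  DifferentiableOn ℂ F Ω₁ ∧ Set.MapsTo F Ω₁ Ω₂ ∧
  ∃ G : Cn m → Cn n, DifferentiableOn ℂ G Ω₂ ∧ Set.MapsTo G Ω₂ Ω₁ ∧
    (∀ z ∈ Ω₁, G (F z) = z) ∧ (∀ w ∈ Ω₂, F (G w) = w)

/-- The holomorphic Jacobian determinant `J_F` of `F` on `Ω` (equidimensional case). -/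
def jacDet {n : ℕ} (Ω : Set (Cn n)) (F : Cn n → Cn n) (z : Cn n) : ℂ :=
  LinearMap.det (fderivWithin ℂ F Ω z).toLinearMap

/-- `|J_F(z)|²`, expressed as `|det (dF(z)* ∘ dF(z))|`; for equidimensional holomorphic maps
this equals the squared modulus of the holomorphic Jacobian determinant. -/
def jacAbsSq {n m : ℕ} (Ω : Set (Cn n)) (F : Cn n → Cn m) (z : Cn n) : ℝ :=
  ‖(LinearMap.det
    (((ContinuousLinearMap.adjoint (fderivWithin ℂ F Ω z)).comp
      (fderivWithin ℂ F Ω z)).toLinearMap))‖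

/-- `Ω` is homogeneous regular (uniformly squeezing). -/
def HomogeneousRegular {n : ℕ} (Ω : Set (Cn n)) : Prop :=
  ∃ c : ℝ, 0 < c ∧ c < 1 ∧ ∀ z ∈ Ω, ∃ f : Cn n → Cn n,
    DifferentiableOn ℂ f Ω ∧ Set.InjOn f Ω ∧ Set.MapsTo f Ω (Metric.ball 0 1) ∧
    f z = 0 ∧ Metric.ball (0 : Cn n) c ⊆ f '' Ω

/-- `Ω` is a bounded strongly pseudoconvex domain with `C²` boundary: `Ω = {ρ < 0}` for a `C²`
defining function `ρ` on a neighborhood of `closure Ω`, with nonvanishing differential on the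
boundary, whose Levi form is positive definite on the complex tangent space at every boundary
point (the Levi form in direction `v` is `D²ρ(v,v) + D²ρ(iv,iv)` up to a positive factor). -/
def StronglyPseudoconvexC2 {n : ℕ} (Ω : Set (Cn n)) : Prop :=
  ∃ (U : Set (Cn n)) (ρ : Cn n → ℝ), IsOpen U ∧ closure Ω ⊆ U ∧
    ContDiffOn ℝ 2 ρ U ∧ Ω = {z ∈ U | ρ z < 0} ∧
    ∀ z ∈ frontier Ω, fderiv ℝ ρ z ≠ 0 ∧
      ∀ v : Cn n, v ≠ 0 → fderiv ℝ ρ z v = 0 → fderiv ℝ ρ z (Complex.I • v) = 0 →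
        0 < fderiv ℝ (fun w => fderiv ℝ ρ w v) z v
          + fderiv ℝ (fun w => fderiv ℝ ρ w (Complex.I • v)) z (Complex.I • v)

/-- `Ω` is pseudoconvex: `-log dist(·, ∂Ω)` is plurisubharmonic on `Ω`. -/
def PseudoconvexDomain {n : ℕ} (Ω : Set (Cn n)) : Prop :=
  PlurisubharmonicOn (fun z => ((-Real.log (Metric.infDist z (frontier Ω)) : ℝ) : EReal)) Ω

/-- The relation defining the induced map: `φ(z)·(Tφ₀)(w) = (Tφ)(w)·φ₀(z)` for all
`φ, φ₀ ∈ Aᵖ(Ω₁)`. -/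
def ApRel {n m : ℕ} {Ω₁ : Set (Cn n)} {Ω₂ : Set (Cn m)} {p : ℝ}
    (T : ApIsometry Ω₁ Ω₂ p) (z : Cn n) (w : Cn m) : Prop :=
  ∀ φ φ₀ : Cn n → ℂ, MemAp Ω₁ p φ → MemAp Ω₁ p φ₀ →
    φ z * T.toFun φ₀ w = T.toFun φ w * φ₀ z

/-- The set `Ω'₁ ⊆ Ω₁`. -/
def OmegaP1 {n m : ℕ} {Ω₁ : Set (Cn n)} {Ω₂ : Set (Cn m)} {p : ℝ}
    (T : ApIsometry Ω₁ Ω₂ p) : Set (Cn n) :=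
  {z ∈ Ω₁ | ∃ w ∈ Ω₂, ApRel T z w}

/-- The set `Ω'₂ ⊆ Ω₂`. -/
def OmegaP2 {n m : ℕ} {Ω₁ : Set (Cn n)} {Ω₂ : Set (Cn m)} {p : ℝ}
    (T : ApIsometry Ω₁ Ω₂ p) : Set (Cn m) :=
  {w ∈ Ω₂ | ∃ z ∈ Ω₁, ApRel T z w}

/-- `e^{-x}` for `x ∈ [-∞, +∞]`, valued in `[0, ∞]`. -/
def eNeg (x : EReal) : ℝ≥0∞ :=
  if x = ⊥ then ⊤ else if x = ⊤ then 0 else ENNReal.ofReal (Real.exp (-x.toReal))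

/-- The logarithm `[0, ∞] → [-∞, ∞]`. -/
def eLog (x : ℝ≥0∞) : EReal :=
  if x = 0 then ⊥ else if x = ⊤ then ⊤ else ((Real.log x.toReal : ℝ) : EReal)
section Aux

instance (n : ℕ) : BorelSpace (Cn n) :=
  PiLp.borelSpace (X := fun _ : Fin n => ℂ) 2

lemma coord_le {n : ℕ} (z : Cn n) (i : Fin n) : ‖z i‖ ≤ ‖z‖ := by
  rw [EuclideanSpace.norm_eq]
  have h : ‖z i‖ ^ 2 ≤ ∑ j, ‖z j‖ ^ 2 :=
    Finset.single_le_sum (fun j _ => sq_nonneg ‖z j‖) (Finset.mem_univ i)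
  calc ‖z i‖ = Real.sqrt (‖z i‖ ^ 2) := (Real.sqrt_sq (norm_nonneg _)).symm
    _ ≤ _ := Real.sqrt_le_sqrt h

lemma vol_lt_top {n : ℕ} {s : Set (Cn n)} (hs : Bornology.IsBounded s) : volume s < ⊤ := by
  obtain ⟨R, hR⟩ := hs.subset_closedBall 0
  have hsub : s ⊆ WithLp.ofLp ⁻¹' Set.pi Set.univ (fun _ : Fin n => closedBall (0:ℂ) R) := by
    intro z hz i _
    have h1 : ‖z‖ ≤ R := mem_closedBall_zero_iff.1 (hR hz)
    exact mem_closedBall_zero_iff.2 ((coord_le z i).trans h1)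
  refine lt_of_le_of_lt (measure_mono hsub) ?_
  show Measure.map (WithLp.toLp 2) (volume : Measure (Fin n → ℂ))
    (WithLp.ofLp ⁻¹' Set.pi Set.univ fun _ => closedBall (0:ℂ) R) < ⊤
  rw [Measure.map_apply (WithLp.measurable_toLp 2 _)
    (WithLp.measurable_ofLp 2 _ (MeasurableSet.univ_pi fun _ => measurableSet_closedBall))]
  show (volume : Measure (Fin n → ℂ)) (Set.pi Set.univ fun _ => closedBall (0:ℂ) R) < ⊤
  rw [MeasureTheory.volume_pi_pi (fun _ : Fin n => closedBall (0:ℂ) R)]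
  exact ENNReal.prod_lt_top (fun i _ => (isCompact_closedBall 0 R).measure_lt_top)

lemma memAp_of_bounded {n : ℕ} {Ω : Set (Cn n)} {p : ℝ} (hΩ : IsBoundedDomain Ω) (hp : 0 < p)
    (φ : Cn n → ℂ) (hd : Differentiable ℂ φ) (C : ℝ) (hC : ∀ z ∈ Ω, ‖φ z‖ ≤ C) :
    MemAp Ω p φ := by
  refine ⟨hd.differentiableOn, ?_⟩
  refine Measure.integrableOn_of_bounded (M := C ^ p) (vol_lt_top hΩ.2.2).ne ?_ ?_
  · exact ((hd.continuous.norm).rpow_const (fun x => Or.inr hp.le)).aestronglyMeasurable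
  · refine (ae_restrict_iff' hΩ.1.measurableSet).2 (Filter.Eventually.of_forall fun z hz => ?_)
    rw [Real.norm_of_nonneg (Real.rpow_nonneg (norm_nonneg _) p)]
    exact Real.rpow_le_rpow (norm_nonneg _) (hC z hz) hp.le

lemma memAp_const {n : ℕ} {Ω : Set (Cn n)} {p : ℝ} (hΩ : IsBoundedDomain Ω) (hp : 0 < p)
    (c : ℂ) : MemAp Ω p (fun _ => c) :=
  memAp_of_bounded hΩ hp _ (differentiable_const c) ‖c‖ (fun _ _ => le_rfl)

lemma memAp_coord {n : ℕ} {Ω : Set (Cn n)} {p : ℝ} (hΩ : IsBoundedDomain Ω) (hp : 0 < p)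
    (i : Fin n) : MemAp Ω p (fun z => z i) := by
  obtain ⟨R, hR⟩ := hΩ.2.2.subset_closedBall 0
  refine memAp_of_bounded hΩ hp _ ((EuclideanSpace.proj (𝕜 := ℂ) i).differentiable) R
    (fun z hz => ?_)
  have h2 : ‖z‖ ≤ R := mem_closedBall_zero_iff.1 (hR hz)
  exact (coord_le z i).trans h2

variable {n m : ℕ} {Ω₁ : Set (Cn n)} {Ω₂ : Set (Cn m)} {p : ℝ}

/-- From `ApRel T z w`, `Tφ(w) = φ(z) · T1(w)`. -/
lemma rel_eval (h₁ : IsBoundedDomain Ω₁) (hp : 0 < p) {T : ApIsometry Ω₁ Ω₂ p}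
    {z : Cn n} {w : Cn m} (hrel : ApRel T z w) {φ : Cn n → ℂ} (hφ : MemAp Ω₁ p φ) :
    T.toFun φ w = φ z * T.toFun (fun _ => 1) w := by
  have h := hrel φ (fun _ => 1) hφ (memAp_const h₁ hp 1)
  simpa using h.symm

/-- `φ₁ z · T1(w) = 1` where `Tφ₁ = 1` on `Ω₂`. -/
lemma key_one (h₁ : IsBoundedDomain Ω₁) (h₂ : IsBoundedDomain Ω₂) (hp : 0 < p)
    {T : ApIsometry Ω₁ Ω₂ p} {z : Cn n} {w : Cn m} (hw : w ∈ Ω₂) (hrel : ApRel T z w)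
    {φ₁ : Cn n → ℂ} (hφ₁ : MemAp Ω₁ p φ₁) (hT1 : ∀ v ∈ Ω₂, T.toFun φ₁ v = 1) :
    φ₁ z * T.toFun (fun _ => 1) w = 1 := by
  rw [← rel_eval h₁ hp hrel hφ₁]
  exact hT1 w hw

lemma T1_ne_zero (h₁ : IsBoundedDomain Ω₁) (h₂ : IsBoundedDomain Ω₂) (hp : 0 < p)
    {T : ApIsometry Ω₁ Ω₂ p} {z : Cn n} {w : Cn m} (hw : w ∈ Ω₂) (hrel : ApRel T z w) :
    T.toFun (fun _ => 1) w ≠ 0 := by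
  obtain ⟨φ₁, hφ₁, hT1⟩ := T.surjective _ (memAp_const h₂ hp 1)
  intro h0
  have := key_one h₁ h₂ hp hw hrel hφ₁ hT1
  rw [h0, mul_zero] at this
  exact zero_ne_one this

/-- Uniqueness of the witness `w` for a given `z`. -/
lemma unique_w (h₁ : IsBoundedDomain Ω₁) (h₂ : IsBoundedDomain Ω₂) (hp : 0 < p)
    {T : ApIsometry Ω₁ Ω₂ p} {z : Cn n} {w w' : Cn m} (hw : w ∈ Ω₂) (hw' : w' ∈ Ω₂)
    (hr : ApRel T z w) (hr' : ApRel T z w') : w = w' := by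
  obtain ⟨φ₁, hφ₁, hT1⟩ := T.surjective _ (memAp_const h₂ hp 1)
  have e1 := key_one h₁ h₂ hp hw hr hφ₁ hT1
  have e1' := key_one h₁ h₂ hp hw' hr' hφ₁ hT1
  have hφz : φ₁ z ≠ 0 := by
    intro h0; rw [h0, zero_mul] at e1; exact zero_ne_one e1
  have hc : T.toFun (fun _ => 1) w = T.toFun (fun _ => 1) w' :=
    mul_left_cancel₀ hφz (e1.trans e1'.symm)
  refine PiLp.ext fun i => ?_
  obtain ⟨ψ, hψ, hTψ⟩ := T.surjective _ (memAp_coord h₂ hp i)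
  have ew : w i = ψ z * T.toFun (fun _ => 1) w := by
    rw [← hTψ w hw]; exact rel_eval h₁ hp hr hψ
  have ew' : w' i = ψ z * T.toFun (fun _ => 1) w' := by
    rw [← hTψ w' hw']; exact rel_eval h₁ hp hr' hψ
  rw [ew, ew', hc]

/-- Uniqueness of the witness `z` for a given `w`. -/
lemma unique_z (h₁ : IsBoundedDomain Ω₁) (h₂ : IsBoundedDomain Ω₂) (hp : 0 < p)
    {T : ApIsometry Ω₁ Ω₂ p} {z z' : Cn n} {w : Cn m} (hw : w ∈ Ω₂)
    (hr : ApRel T z w) (hr' : ApRel T z' w) : z = z' := by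
  have hT1 := T1_ne_zero h₁ h₂ hp hw hr
  refine PiLp.ext fun i => ?_
  have e : T.toFun (fun v => v i) w = z i * T.toFun (fun _ => 1) w :=
    rel_eval h₁ hp hr (memAp_coord h₁ hp i)
  have e' : T.toFun (fun v => v i) w = z' i * T.toFun (fun _ => 1) w :=
    rel_eval h₁ hp hr' (memAp_coord h₁ hp i)
  exact mul_right_cancel₀ hT1 (e.symm.trans e')

lemma continuousAt_of_memAp {k : ℕ} {Ω : Set (Cn k)} {p : ℝ} {φ : Cn k → ℂ}
    (hΩ : IsOpen Ω) (hφ : MemAp Ω p φ) {z : Cn k} (hz : z ∈ Ω) : ContinuousAt φ z :=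
  hφ.1.continuousOn.continuousAt (hΩ.mem_nhds hz)

end Aux

/-- (i) every `z ∈ Ω'₁` has a unique witness `w ∈ Ω₂`, and any map `F`
realizing the witnesses is a bijection `Ω'₁ → Ω'₂`; (ii) limits of pairs `(z_j, F z_j)` inside
`Ω₁ × Ω₂` stay in `Ω'₁ × Ω'₂` with `F z₀ = w₀`; (iii) `φ(z) = 0 ↔ (Tφ)(F z) = 0` on `Ω'₁`. -/
theorem statement8 {n m : ℕ} {Ω₁ : Set (Cn n)} {Ω₂ : Set (Cn m)}
    (h₁ : IsBoundedDomain Ω₁) (h₂ : IsBoundedDomain Ω₂)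
    {p : ℝ} (hp : 0 < p) (hpe : ∀ k : ℕ, p ≠ 2 * (k : ℝ))
    (T : ApIsometry Ω₁ Ω₂ p) :
    (∀ z ∈ OmegaP1 T, ∃! w, w ∈ Ω₂ ∧ ApRel T z w) ∧
    ∀ F : Cn n → Cn m, (∀ z ∈ OmegaP1 T, F z ∈ Ω₂ ∧ ApRel T z (F z)) →
      Set.BijOn F (OmegaP1 T) (OmegaP2 T) ∧
      (∀ (zs : ℕ → Cn n) (z₀ : Cn n) (w₀ : Cn m),
        (∀ j, zs j ∈ OmegaP1 T) → z₀ ∈ Ω₁ → w₀ ∈ Ω₂ →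
        Filter.Tendsto zs Filter.atTop (𝓝 z₀) →
        Filter.Tendsto (fun j => F (zs j)) Filter.atTop (𝓝 w₀) →
        z₀ ∈ OmegaP1 T ∧ w₀ ∈ OmegaP2 T ∧ F z₀ = w₀) ∧
      ∀ z ∈ OmegaP1 T, ∀ φ, MemAp Ω₁ p φ → (φ z = 0 ↔ T.toFun φ (F z) = 0) := by
  constructor
  · rintro z ⟨hz, w, hw, hrel⟩
    exact ⟨w, ⟨hw, hrel⟩, fun w' ⟨hw', hrel'⟩ => unique_w h₁ h₂ hp hw' hw hrel' hrel⟩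
  · intro F hF
    refine ⟨⟨?_, ?_, ?_⟩, ?_, ?_⟩
    · -- MapsTo
      rintro z hz
      exact ⟨(hF z hz).1, z, hz.1, (hF z hz).2⟩
    · -- InjOn
      rintro z hz z' hz' hFz
      have h2 := (hF z' hz').2
      rw [← hFz] at h2
      exact unique_z h₁ h₂ hp (hF z hz).1 (hF z hz).2 h2
    · -- SurjOn
      rintro w ⟨hw, z, hz, hrel⟩
      have hzP : z ∈ OmegaP1 T := ⟨hz, w, hw, hrel⟩
      refine ⟨z, hzP, ?_⟩
      exact unique_w h₁ h₂ hp (hF z hzP).1 hw (hF z hzP).2 hrel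
    · -- limits
      intro zs z₀ w₀ hmem hz₀ hw₀ hzs hws
      have hrel₀ : ApRel T z₀ w₀ := by
        intro φ φ₀ hφ hφ₀
        have cφ : ContinuousAt φ z₀ := continuousAt_of_memAp h₁.1 hφ hz₀
        have cφ₀ : ContinuousAt φ₀ z₀ := continuousAt_of_memAp h₁.1 hφ₀ hz₀
        have cTφ : ContinuousAt (T.toFun φ) w₀ := continuousAt_of_memAp h₂.1 (T.mem φ hφ) hw₀
        have cTφ₀ : ContinuousAt (T.toFun φ₀) w₀ :=
          continuousAt_of_memAp h₂.1 (T.mem φ₀ hφ₀) hw₀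
        have l1 : Filter.Tendsto (fun j => φ (zs j) * T.toFun φ₀ (F (zs j))) Filter.atTop
            (𝓝 (φ z₀ * T.toFun φ₀ w₀)) :=
          (cφ.tendsto.comp hzs).mul (cTφ₀.tendsto.comp hws)
        have l2 : Filter.Tendsto (fun j => T.toFun φ (F (zs j)) * φ₀ (zs j)) Filter.atTop
            (𝓝 (T.toFun φ w₀ * φ₀ z₀)) :=
          (cTφ.tendsto.comp hws).mul (cφ₀.tendsto.comp hzs)
        have heq : (fun j => φ (zs j) * T.toFun φ₀ (F (zs j)))
            = fun j => T.toFun φ (F (zs j)) * φ₀ (zs j) :=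
          funext fun j => (hF (zs j) (hmem j)).2 φ φ₀ hφ hφ₀
        rw [heq] at l1
        exact tendsto_nhds_unique l1 l2
      have hz₀P : z₀ ∈ OmegaP1 T := ⟨hz₀, w₀, hw₀, hrel₀⟩
      refine ⟨hz₀P, ⟨hw₀, z₀, hz₀, hrel₀⟩, ?_⟩
      exact unique_w h₁ h₂ hp (hF z₀ hz₀P).1 hw₀ (hF z₀ hz₀P).2 hrel₀
    · -- zero sets
      intro z hz φ hφ
      have hT1 := T1_ne_zero h₁ h₂ hp (hF z hz).1 (hF z hz).2
      have e : T.toFun φ (F z) = φ z * T.toFun (fun _ => 1) (F z) :=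
        rel_eval h₁ hp (hF z hz).2 hφ
      constructor
      · intro h0; rw [e, h0, zero_mul]
      · intro h0; rw [e] at h0
        exact (mul_eq_zero.1 h0).resolve_right hT1
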